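/- (Theorem 3.2.) Let ζ_c ∈ ℂ with ζ_c ≠ δ_j for all j = 1,…,d, and let λ ∈ ℂ be such that λ ≠ δ_j for all j and |λ − ζ_c| < |δ_j − ζ_c| for all j = φ+1,…,d. Then the series Σ_{k=0}^{∞} B̃(ζ_c) [(λ − ζ_c) M_B B̃(ζ_c)]^k converges, and its sum equals (I − V_φ V̂_φ^H M_B) B(λ)^{-1}. -/

import Mathlib

open Matrix BigOperators

lemma sum_castLE_aux {d φ : ℕ} (hφd : φ ≤ d) (F : Fin d → ℂ) :
    ∑ x : Fin φ, F (Fin.castLE hφd x) = ∑ x : Fin d, if (x : ℕ) < φ then F x else 0 := by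
  set G : ℕ → ℂ := fun k => if h : k < d then F ⟨k, h⟩ else 0 with hG
  have h1 : ∑ x : Fin φ, F (Fin.castLE hφd x) = ∑ k ∈ Finset.range φ, G k := by
    rw [Finset.sum_range fun k => G k]
    apply Finset.sum_congr rfl
    intro x _
    simp only [hG]
    rw [dif_pos (lt_of_lt_of_le x.2 hφd)]
    rfl
  have h2 : ∑ x : Fin d, (if (x : ℕ) < φ then F x else 0)
      = ∑ k ∈ Finset.range d, (if k < φ then G k else 0) := by
    rw [Finset.sum_range fun k => if k < φ then G k else 0]
    apply Finset.sum_congr rfl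
    intro x _
    by_cases h : (x : ℕ) < φ
    · simp only [hG, h, if_true, dif_pos x.2]
    · simp [h]
  rw [h1, h2]
  rw [← Finset.sum_subset (Finset.range_subset_range.mpr hφd)
    (fun x _ hx => by simp [Finset.mem_range.not.mp hx])]
  apply Finset.sum_congr rfl
  intro k hk
  rw [if_pos (Finset.mem_range.mp hk)]

/-- (Theorem 3.2.) If `ζ_c` is not an eigenvalue of the diagonalizable
pencil `(B, M_B)` and `λ` satisfies `|λ - ζ_c| < |δ_j - ζ_c|` for all `j > φ`, then the
Neumann-type series `∑ₖ B̃(ζ_c) [(λ - ζ_c) M_B B̃(ζ_c)]^k` converges with sum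
`(I - V_φ V̂_φᴴ M_B) B(λ)⁻¹`. -/
theorem stmt_13 {d : ℕ}
    (B MB V Vh : Matrix (Fin d) (Fin d) ℂ) (δ : Fin d → ℂ)
    (hMB : IsUnit MB)
    (hbi : Vhᴴ * MB * V = 1)
    (hright : ∀ j, B *ᵥ (fun a => V a j) = δ j • (MB *ᵥ (fun a => V a j)))
    (hleft : ∀ j, (fun a => star (Vh a j)) ᵥ* B = δ j • ((fun a => star (Vh a j)) ᵥ* MB))
    (φ : ℕ) (hφ1 : 1 ≤ φ) (hφd : φ ≤ d)
    (Vφ Vhφ : Matrix (Fin d) (Fin φ) ℂ)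
    (hVφ : Vφ = V.submatrix id (Fin.castLE hφd))
    (hVhφ : Vhφ = Vh.submatrix id (Fin.castLE hφd))
    (ζc lam : ℂ)
    (hζc : ∀ j, ζc ≠ δ j)
    (hlam : ∀ j, lam ≠ δ j)
    (hin : ∀ j : Fin d, φ ≤ (j : ℕ) → ‖lam - ζc‖ < ‖δ j - ζc‖)
    (Bt : Matrix (Fin d) (Fin d) ℂ)
    (hBt : Bt = (1 - Vφ * Vhφᴴ * MB) * (B - ζc • MB)⁻¹) :
    HasSum (fun k : ℕ => Bt * ((lam - ζc) • (MB * Bt)) ^ k)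
      ((1 - Vφ * Vhφᴴ * MB) * (B - lam • MB)⁻¹) := by
  classical
  have hWV : (Vhᴴ * MB) * V = 1 := hbi
  have hVW : V * (Vhᴴ * MB) = 1 := mul_eq_one_comm.mp hWV
  have hmid : ∀ X : Matrix (Fin d) (Fin d) ℂ, Vhᴴ * (MB * (V * X)) = X := by
    intro X
    rw [← Matrix.mul_assoc, ← Matrix.mul_assoc, hbi, Matrix.one_mul]
  -- B * V = MB * V * diagonal δ
  have hBV : B * V = MB * V * Matrix.diagonal δ := by
    ext i j
    rw [Matrix.mul_diagonal, Matrix.mul_apply, Matrix.mul_apply]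
    have h := congrFun (hright j) i
    simp only [Matrix.mulVec, dotProduct, Pi.smul_apply, smul_eq_mul] at h
    rw [h, mul_comm]
  -- factorization of the pencil
  have hfac : ∀ ζ : ℂ, B - ζ • MB = MB * V * Matrix.diagonal (fun j => δ j - ζ) * (Vhᴴ * MB) := by
    intro ζ
    have hd : Matrix.diagonal (fun j => δ j - ζ) = Matrix.diagonal δ - ζ • 1 := by
      ext i j
      by_cases h : i = j <;> simp [Matrix.diagonal_apply, Matrix.one_apply, h]
    rw [hd, Matrix.mul_sub, Matrix.sub_mul, ← hBV]
    rw [Matrix.mul_assoc B V _, hVW, Matrix.mul_one]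
    congr 1
    rw [Matrix.mul_smul, Matrix.mul_one, Matrix.smul_mul, Matrix.mul_assoc, hVW, Matrix.mul_one]
  have hne : ∀ (ζ : ℂ), (∀ j, ζ ≠ δ j) → ∀ j, δ j - ζ ≠ 0 := by
    intro ζ hζ j
    exact sub_ne_zero.mpr (Ne.symm (hζ j))
  -- inverse formula
  have hinv : ∀ ζ : ℂ, (∀ j, ζ ≠ δ j) →
      (B - ζ • MB)⁻¹ = V * Matrix.diagonal (fun j => (δ j - ζ)⁻¹) * Vhᴴ := by
    intro ζ hζ
    apply Matrix.inv_eq_left_inv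
    rw [hfac ζ]
    simp only [Matrix.mul_assoc]
    rw [hmid]
    rw [← Matrix.mul_assoc (Matrix.diagonal fun j => (δ j - ζ)⁻¹)
      (Matrix.diagonal fun j => δ j - ζ), Matrix.diagonal_mul_diagonal]
    have h1 : (fun j => (δ j - ζ)⁻¹ * (δ j - ζ)) = fun _ => (1 : ℂ) := by
      funext j; exact inv_mul_cancel₀ (hne ζ hζ j)
    rw [h1, Matrix.diagonal_one, Matrix.one_mul]
    exact hVW
  -- the projector as a diagonal conjugation
  set e : Fin d → ℂ := fun j => if (j : ℕ) < φ then 1 else 0 with he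
  have hE : Vφ * Vhφᴴ = V * Matrix.diagonal e * Vhᴴ := by
    ext i j
    rw [hVφ, hVhφ]
    rw [Matrix.mul_apply, Matrix.mul_apply]
    simp only [Matrix.mul_diagonal, Matrix.conjTranspose_apply, Matrix.submatrix_apply, id]
    rw [sum_castLE_aux hφd (fun x => V i x * star (Vh j x))]
    apply Finset.sum_congr rfl
    intro x _
    by_cases h : (x : ℕ) < φ <;> simp [he, h]
  have hP : (1 : Matrix (Fin d) (Fin d) ℂ) - Vφ * Vhφᴴ * MB
      = V * Matrix.diagonal (fun j => 1 - e j) * (Vhᴴ * MB) := by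
    have hd : Matrix.diagonal (fun j => 1 - e j) = 1 - Matrix.diagonal e := by
      ext i j
      by_cases h : i = j <;> simp [Matrix.diagonal_apply, Matrix.one_apply, h]
    rw [hd, Matrix.mul_sub, Matrix.sub_mul, Matrix.mul_one, hVW]
    congr 1
    rw [hE]
    simp only [Matrix.mul_assoc]
  -- diagonal form of Bt
  set f : Fin d → ℂ := fun j => if (j : ℕ) < φ then 0 else (δ j - ζc)⁻¹ with hf
  have hfe : (fun j => (1 - e j) * (δ j - ζc)⁻¹) = f := by
    funext j
    by_cases h : (j : ℕ) < φ <;> simp [he, hf, h]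
  have hBtd : Bt = V * Matrix.diagonal f * Vhᴴ := by
    rw [hBt, hP, hinv ζc hζc]
    simp only [Matrix.mul_assoc]
    rw [hmid, ← Matrix.mul_assoc (Matrix.diagonal fun j => 1 - e j)
      (Matrix.diagonal fun j => (δ j - ζc)⁻¹), Matrix.diagonal_mul_diagonal, hfe]
  -- the k-th term of the series
  have hsmul : ∀ (a : ℂ) (c : Fin d → ℂ),
      a • (V * (Matrix.diagonal c * Vhᴴ)) = V * (Matrix.diagonal (fun j => a * c j) * Vhᴴ) := by
    intro a c
    rw [← Matrix.mul_smul, ← Matrix.smul_mul]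
    congr 2
    have : (fun j => a * c j) = a • c := by funext j; simp
    rw [this, Matrix.diagonal_smul]
  have hterm : ∀ k : ℕ, Bt * ((lam - ζc) • (MB * Bt)) ^ k
      = V * Matrix.diagonal (fun j => (lam - ζc) ^ k * f j ^ (k + 1)) * Vhᴴ := by
    intro k
    induction k with
    | zero => simp [hBtd]
    | succ k ih =>
      rw [pow_succ, ← Matrix.mul_assoc, ih]
      rw [Matrix.mul_smul]
      conv_lhs => rw [hBtd]
      simp only [Matrix.mul_assoc]
      rw [hmid, ← Matrix.mul_assoc (Matrix.diagonal fun j => (lam - ζc) ^ k * f j ^ (k + 1))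
        (Matrix.diagonal f), Matrix.diagonal_mul_diagonal, hsmul]
      have hfun : (fun j => (lam - ζc) * ((lam - ζc) ^ k * f j ^ (k + 1) * f j))
          = fun j => (lam - ζc) ^ (k + 1) * f j ^ (k + 1 + 1) := by
        funext j; ring
      rw [hfun]
  -- the target as a diagonal conjugation
  set g : Fin d → ℂ := fun j => if (j : ℕ) < φ then 0 else (δ j - lam)⁻¹ with hg
  have hge : (fun j => (1 - e j) * (δ j - lam)⁻¹) = g := by
    funext j
    by_cases h : (j : ℕ) < φ <;> simp [he, hg, h]
  have htarget : (1 - Vφ * Vhφᴴ * MB) * (B - lam • MB)⁻¹ = V * Matrix.diagonal g * Vhᴴ := by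
    rw [hP, hinv lam hlam]
    simp only [Matrix.mul_assoc]
    rw [hmid, ← Matrix.mul_assoc (Matrix.diagonal fun j => 1 - e j)
      (Matrix.diagonal fun j => (δ j - lam)⁻¹), Matrix.diagonal_mul_diagonal, hge]
  rw [htarget]
  -- the scalar-level sums
  have hsum : HasSum (fun k : ℕ => fun j => (lam - ζc) ^ k * f j ^ (k + 1)) g := by
    rw [Pi.hasSum]
    intro j
    by_cases h : (j : ℕ) < φ
    · have h0 : (fun k : ℕ => (lam - ζc) ^ k * f j ^ (k + 1)) = fun _ => 0 := by
        funext k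
        simp [hf, h]
      rw [h0]
      have hgj : g j = 0 := by simp [hg, h]
      rw [hgj]
      exact hasSum_zero
    · set a : ℂ := δ j - ζc with ha
      have ha0 : a ≠ 0 := hne ζc hζc j
      have hr : ‖(lam - ζc) / a‖ < 1 := by
        rw [norm_div, div_lt_one (norm_pos_iff.mpr ha0)]
        exact hin j (le_of_not_gt h)
      have hgeo := (hasSum_geometric_of_norm_lt_one hr).mul_left a⁻¹
      have heq : (fun k : ℕ => a⁻¹ * ((lam - ζc) / a) ^ k)
          = fun k : ℕ => (lam - ζc) ^ k * f j ^ (k + 1) := by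
        funext k
        simp only [hf, if_neg h, ← ha, div_eq_mul_inv, mul_pow]
        ring
      rw [heq] at hgeo
      have hval : a⁻¹ * (1 - (lam - ζc) / a)⁻¹ = g j := by
        rw [hg]
        simp only [if_neg h]
        rw [← mul_inv]
        congr 1
        field_simp
        ring
      rwa [hval] at hgeo
  -- transport through the continuous linear map c ↦ V * diagonal c * Vhᴴ
  let L : (Fin d → ℂ) →ₗ[ℂ] Matrix (Fin d) (Fin d) ℂ :=
    { toFun := fun c => V * Matrix.diagonal c * Vhᴴ
      map_add' := fun x y => by
        show V * Matrix.diagonal (x + y) * Vhᴴ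
          = V * Matrix.diagonal x * Vhᴴ + V * Matrix.diagonal y * Vhᴴ
        rw [show Matrix.diagonal (x + y) = Matrix.diagonal x + Matrix.diagonal y from
          (Matrix.diagonal_add x y).symm, Matrix.mul_add, Matrix.add_mul]
      map_smul' := fun r x => by
        show V * Matrix.diagonal (r • x) * Vhᴴ = r • (V * Matrix.diagonal x * Vhᴴ)
        rw [Matrix.diagonal_smul, Matrix.mul_smul, Matrix.smul_mul] }
  have hLc : Continuous L := L.continuous_of_finiteDimensional
  have h2 := hsum.map L.toAddMonoidHom hLc
  have h3 : (L.toAddMonoidHom ∘ fun k : ℕ => fun j => (lam - ζc) ^ k * f j ^ (k + 1))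
      = fun k : ℕ => Bt * ((lam - ζc) • (MB * Bt)) ^ k := by
    funext k
    exact (hterm k).symm
  rw [h3] at h2
  exact h2
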